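/- Equality of computable real numbers is undecidable: there is no code c : Nat.Partrec.Code such that for all codes e₁, e₂ : Nat.Partrec.Code and all reals x, y, if e₁ names x and e₂ names y, then c.eval (Encodable.encode (e₁, e₂)) terminates and its value equals 1 if x = y and equals 0 if x ≠ y (Borel's observation, proved by Rice). -/

import Mathlib

/-- A code `e` names a real `x` if for every `n`, `e.eval n` terminates with
output `Encodable.encode q` for some rational `q` with `|x - q| ≤ 2⁻¹ ^ n`. -/
def Names (e : Nat.Partrec.Code) (x : ℝ) : Prop :=
  ∀ n : ℕ, ∃ q : ℚ, Encodable.encode q ∈ e.eval n ∧ |x - (q : ℝ)| ≤ (2:ℝ)⁻¹ ^ n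

namespace BorelRice

open Nat.Partrec (Code)
open Nat.Partrec.Code

/-- Bounded search for the least halting time of `e` on input `0`. -/
def htAux (e : Code) : ℕ → Option ℕ
  | 0 => none
  | n+1 =>
    match htAux e n with
    | some k => some k
    | none => (evaln n e 0).map fun _ => n

theorem htAux_of_le {e : Code} (h : ∃ k, (evaln k e 0).isSome = true) :
    ∀ {n : ℕ}, n ≤ Nat.find h → htAux e n = none := by
  intro n
  induction n with
  | zero => intro _; rfl
  | succ m ih =>
    intro hm
    have h1 : htAux e m = none := ih (le_trans (Nat.le_succ m) hm)
    have h2 : evaln m e 0 = none :=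
      Option.not_isSome_iff_eq_none.1 (Nat.find_min h (lt_of_lt_of_le (Nat.lt_succ_self m) hm))
    simp [htAux, h1, h2]

theorem htAux_of_lt {e : Code} (h : ∃ k, (evaln k e 0).isSome = true) :
    ∀ {n : ℕ}, Nat.find h < n → htAux e n = some (Nat.find h) := by
  intro n
  induction n with
  | zero => intro hm; exact absurd hm (Nat.not_lt_zero _)
  | succ m ih =>
    intro hm
    rcases Nat.lt_succ_iff_lt_or_eq.1 hm with hlt | heq
    · simp [htAux, ih hlt]
    · have h1 : htAux e m = none := htAux_of_le h (le_of_eq heq.symm)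
      obtain ⟨a, ha⟩ := Option.isSome_iff_exists.1 (heq ▸ Nat.find_spec h)
      simp [htAux, h1, ha, heq]

theorem htAux_of_not {e : Code} (h : ¬ ∃ k, (evaln k e 0).isSome = true) (n : ℕ) :
    htAux e n = none := by
  induction n with
  | zero => rfl
  | succ m ih =>
    have h2 : evaln m e 0 = none :=
      Option.not_isSome_iff_eq_none.1 fun hs => h ⟨m, hs⟩
    simp [htAux, ih, h2]

/-- The rational output at stage `n`. -/
def outQ (e : Code) (n : ℕ) : ℚ :=
  match htAux e (n+1) with
  | some k => (2:ℚ)⁻¹ ^ k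
  | none => 0

/-- The encoded output at stage `n`. -/
def outN (e : Code) (n : ℕ) : ℕ :=
  match htAux e (n+1) with
  | some k => Nat.pair (Encodable.encode (1:ℤ)) (2 ^ k)
  | none => Nat.pair (Encodable.encode (0:ℤ)) 1

theorem encode_rat (q : ℚ) :
    Encodable.encode q = Nat.pair (Encodable.encode q.num) q.den := rfl

theorem num_halfpow (k : ℕ) : ((2:ℚ)⁻¹ ^ k).num = 1 := by
  rw [Rat.num_pow]
  norm_num

theorem den_halfpow (k : ℕ) : ((2:ℚ)⁻¹ ^ k).den = 2 ^ k := by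
  rw [Rat.den_pow]
  norm_num

theorem encode_halfpow (k : ℕ) :
    Encodable.encode ((2:ℚ)⁻¹ ^ k) = Nat.pair (Encodable.encode (1:ℤ)) (2 ^ k) := by
  rw [encode_rat, num_halfpow, den_halfpow]

theorem outN_eq (e : Code) (n : ℕ) : outN e n = Encodable.encode (outQ e n) := by
  unfold outN outQ
  cases htAux e (n+1) with
  | none => rfl
  | some k => exact (encode_halfpow k).symm

open Classical in
/-- The real named by the code we construct from `e`. -/
noncomputable def xval (e : Code) : ℝ :=
  if h : ∃ k, (evaln k e 0).isSome = true then (2:ℝ)⁻¹ ^ (Nat.find h) else 0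

theorem approx (e : Code) (n : ℕ) : |xval e - (outQ e n : ℝ)| ≤ (2:ℝ)⁻¹ ^ n := by
  unfold xval
  by_cases h : ∃ k, (evaln k e 0).isSome = true
  · rw [dif_pos h]
    rcases le_or_gt (Nat.find h) n with hle | hlt
    · rw [outQ, htAux_of_lt h (Nat.lt_succ_of_le hle)]
      push_cast
      simp only [sub_self, abs_zero]
      positivity
    · rw [outQ, htAux_of_le h hlt]
      push_cast
      rw [sub_zero, abs_of_nonneg (by positivity)]
      exact pow_le_pow_of_le_one (by norm_num) (by norm_num) hlt.le
  · rw [dif_neg h, outQ, htAux_of_not h]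
    push_cast
    simp only [sub_zero, abs_zero]
    positivity

theorem dom_iff (e : Code) : (e.eval 0).Dom ↔ ∃ k, (evaln k e 0).isSome = true := by
  constructor
  · intro hd
    obtain ⟨a, ha⟩ := Part.dom_iff_mem.1 hd
    obtain ⟨k, hk⟩ := evaln_complete.1 ha
    exact ⟨k, Option.isSome_iff_exists.2 ⟨a, hk⟩⟩
  · rintro ⟨k, hk⟩
    obtain ⟨a, ha⟩ := Option.isSome_iff_exists.1 hk
    exact Part.dom_iff_mem.2 ⟨a, evaln_complete.2 ⟨k, ha⟩⟩

theorem xval_eq_zero_iff (e : Code) : xval e = 0 ↔ ¬ (e.eval 0).Dom := by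
  unfold xval
  by_cases h : ∃ k, (evaln k e 0).isSome = true
  · rw [dif_pos h]
    exact iff_of_false (pow_ne_zero _ (by norm_num)) (not_not_intro ((dom_iff e).2 h))
  · rw [dif_neg h]
    exact iff_of_true rfl (fun hd => h ((dom_iff e).1 hd))

/-- `htAux` as a raw `Nat.rec`. -/
def htRec (e : Code) (n : ℕ) : Option ℕ :=
  Nat.rec none (fun q ih => Option.casesOn ih ((evaln q e 0).map fun _ => q) some) n

theorem htRec_eq (e : Code) : ∀ n, htRec e n = htAux e n
  | 0 => rfl
  | n+1 => by
    show (Option.casesOn (htRec e n) ((evaln n e 0).map fun _ => n) some : Option ℕ) = _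
    rw [htRec_eq e n]
    cases h : htAux e n <;> simp [htAux, h]

theorem htAux_primrec : Primrec₂ htAux := by
  have hstep : Primrec₂ (fun (p : Code × ℕ) (q : ℕ × Option ℕ) =>
      (Option.casesOn q.2 ((evaln q.1 p.1 0).map fun _ => q.1) some : Option ℕ)) := by
    refine Primrec.to₂ (Primrec.option_casesOn
      (o := fun p : (Code × ℕ) × (ℕ × Option ℕ) => p.2.2)
      (f := fun p => (evaln p.2.1 p.1.1 0).map fun _ => p.2.1)
      (g := fun _ k => some k) ?_ ?_ ?_)
    · exact Primrec.snd.comp Primrec.snd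
    · refine Primrec.option_map ?_ ?_
      · exact primrec_evaln.comp
          (((Primrec.fst.comp Primrec.snd).pair (Primrec.fst.comp Primrec.fst)).pair
            (Primrec.const 0))
      · exact ((Primrec.fst.comp Primrec.snd).comp Primrec.fst).to₂
    · exact (Primrec.option_some.comp Primrec.snd).to₂
  have := Primrec.nat_rec' (f := fun p : Code × ℕ => p.2)
    (g := fun _ : Code × ℕ => (none : Option ℕ))
    (h := fun p q => (Option.casesOn q.2 ((evaln q.1 p.1 0).map fun _ => q.1) some : Option ℕ))
    Primrec.snd (Primrec.const none) hstep
  exact this.of_eq fun p => htRec_eq p.1 p.2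

theorem pow2_primrec : Primrec (fun k : ℕ => 2 ^ k) := by
  have := (Primrec.nat_iff.2 Nat.Primrec.pow).comp
    (Primrec₂.natPair.comp (Primrec.const 2) Primrec.id)
  exact this.of_eq fun k => by simp [Nat.unpaired]

theorem outN_primrec : Primrec₂ outN := by
  refine (Primrec.option_casesOn
    (o := fun p : Code × ℕ => htAux p.1 (p.2 + 1))
    (f := fun _ => Nat.pair (Encodable.encode (0:ℤ)) 1)
    (g := fun _ k => Nat.pair (Encodable.encode (1:ℤ)) (2 ^ k)) ?_ ?_ ?_).of_eq ?_
  · exact htAux_primrec.comp Primrec.fst (Primrec.succ.comp Primrec.snd)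
  · exact Primrec.const _
  · exact (Primrec₂.natPair.comp (Primrec.const _) (pow2_primrec.comp Primrec.snd)).to₂
  · intro p
    show (Option.casesOn (htAux p.1 (p.2+1)) _ _ : ℕ) = outN p.1 p.2
    unfold outN
    cases htAux p.1 (p.2+1) with
    | none => rfl
    | some k => rfl

theorem main_code : ∃ cg : Code, ∀ (e : Code) (n : ℕ),
    (cg.curry (Encodable.encode e)).eval n = Part.some (outN e n) := by
  have h1 : Computable fun m : ℕ => outN (Denumerable.ofNat Code m.unpair.1) m.unpair.2 :=
    (outN_primrec.comp ((Primrec.ofNat Code).comp (Primrec.fst.comp Primrec.unpair))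
      (Primrec.snd.comp Primrec.unpair)).to_comp
  obtain ⟨cg, hcg⟩ := exists_code.1 (Partrec.nat_iff.1 h1)
  refine ⟨cg, fun e n => ?_⟩
  rw [eval_curry, hcg]
  simp [Nat.unpair_pair, Denumerable.ofNat_encode]

/-- Code naming zero. -/
def zc : Code := Code.const (Encodable.encode (0:ℚ))

theorem names_zc : Names zc 0 := by
  intro n
  refine ⟨0, ?_, ?_⟩
  · rw [zc, eval_const]
    exact Part.mem_some _
  · push_cast
    simp only [sub_zero, abs_zero]
    positivity

theorem names_main {cg : Code}
    (hcg : ∀ (e : Code) (n : ℕ), (cg.curry (Encodable.encode e)).eval n = Part.some (outN e n))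
    (e : Code) : Names (cg.curry (Encodable.encode e)) (xval e) := by
  intro n
  refine ⟨outQ e n, ?_, approx e n⟩
  rw [hcg e n, outN_eq]
  exact Part.mem_some _

end BorelRice

open BorelRice Nat.Partrec.Code in
/-- Borel/Rice: equality of computable real numbers is undecidable. -/
theorem equality_undecidable :
    ¬ ∃ c : Nat.Partrec.Code, ∀ (e₁ e₂ : Nat.Partrec.Code) (x y : ℝ),
        Names e₁ x → Names e₂ y →
        ∃ v : ℕ, v ∈ c.eval (Encodable.encode (e₁, e₂)) ∧
          (x = y → v = 1) ∧ (x ≠ y → v = 0) := by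
  classical
  rintro ⟨c, hc⟩
  obtain ⟨cg, hcg⟩ := main_code
  apply ComputablePred.halting_problem 0
  rw [ComputablePred.computable_iff]
  refine ⟨fun e => decide ((e.eval 0).Dom), ?_, by funext e; simp⟩
  have hencode : Computable fun e : Nat.Partrec.Code =>
      Encodable.encode ((cg.curry (Encodable.encode e), zc) : Nat.Partrec.Code × Nat.Partrec.Code) :=
    (Primrec.encode.comp ((primrec₂_curry.comp (Primrec.const cg) Primrec.encode).pair
      (Primrec.const zc))).to_comp
  have hpart : Partrec fun e : Nat.Partrec.Code =>
      (c.eval (Encodable.encode (cg.curry (Encodable.encode e), zc))).map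
        fun v => decide (v = 0) :=
    (eval_part.comp (Computable.const c) hencode).map
      ((PrimrecPred.decide (Primrec.eq.comp Primrec.snd (Primrec.const 0))).to_comp.to₂)
  refine Partrec.of_eq_tot hpart fun e => ?_
  obtain ⟨v, hv, h1, h0⟩ := hc (cg.curry (Encodable.encode e)) zc (xval e) 0
    (names_main hcg e) names_zc
  have hval : decide ((e.eval 0).Dom) = decide (v = 0) := by
    by_cases hd : (e.eval 0).Dom
    · have hx : xval e ≠ 0 := fun hz => ((xval_eq_zero_iff e).1 hz) hd
      rw [h0 hx]
      simp [hd]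
    · rw [h1 ((xval_eq_zero_iff e).2 hd)]
      simp [hd]
  rw [hval]
  exact Part.mem_map _ hv
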